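/- Let S be a semigroup satisfying the identity x·y·z·x·y = x·y for all x, y, z ∈ S, and suppose that for all x, y, z ∈ S, x·y·y = x·y or z·z·x = z·x. If there exist a, b ∈ S with a·b·b ≠ a·b, then for that b and all z, u, w ∈ S, both z·b·u·w = z·u·w and z·u·b·w = z·b·w hold. -/
import Mathlib


theorem stmt_13 {S : Type*} [Semigroup S]
    (hGRB : ∀ x y z : S, x * y * z * x * y = x * y)
    (h2 : ∀ x y z : S, x * y * y = x * y ∨ z * z * x = z * x)
    (a b : S) (hab : a * b * b ≠ a * b) :
    ∀ z u w : S, z * b * u * w = z * u * w ∧ z * u * b * w = z * b * w := by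
  -- Middle deletion lemma (from GRB alone)
  have M : ∀ x y s u v : S, x * (y * (s * (u * v))) = x * (y * (u * v)) := by
    intro x y s u v
    have h1 := hGRB u v (x * y)
    simp only [mul_assoc] at h1
    have h3 := congrArg (· * (u * v)) (hGRB x y (s * (u * v)))
    simp only [mul_assoc] at h3
    rw [h1] at h3
    exact h3
  -- no w·a can satisfy the first disjunct of h2 with y = b
  have habb : ∀ w : S, ¬ (w * a * b * b = w * a * b) := by
    intro w h
    apply hab
    have h4 := congrArg (· * b) (hGRB a b w)
    simp only [mul_assoc] at h4 h ⊢
    rw [h] at h4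
    have h5 := hGRB a b w
    simp only [mul_assoc] at h5
    rw [h5] at h4
    exact h4.symm
  -- hence z·z·(w·a) = z·(w·a) for all z, w
  have F3 : ∀ z w : S, z * z * (w * a) = z * (w * a) := by
    intro z w
    exact (h2 (w * a) b z).resolve_left (habb w)
  -- key: z·z·g = z·w·g for any g a product of two elements
  have D : ∀ z w g₁ g₂ : S, z * (z * (g₁ * g₂)) = z * (w * (g₁ * g₂)) := by
    intro z w g₁ g₂
    have h3 := congrArg (· * (g₁ * g₂)) (F3 z w)
    simp only [mul_assoc] at h3
    rw [M z w a g₁ g₂, M z z w g₁ g₂] at h3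
    exact h3
  -- duplication of the middle letter in a 3-letter product
  have T : ∀ z u x : S, z * (u * x) = z * (u * (u * x)) := by
    intro z u x
    have h1 := congrArg (z * ·) (hGRB u x z)
    simp only [mul_assoc] at h1
    rw [M z u x z (u*x), M z u z u x] at h1
    exact h1.symm
  intro z u w
  constructor
  · show z * b * u * w = z * u * w
    simp only [mul_assoc]
    rw [← D z b u w, D z u u w, ← T z u w]
  · show z * u * b * w = z * b * w
    simp only [mul_assoc]
    rw [← D z u b w, D z b b w, ← T z b w]
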